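/- arXiv:2306.07620 — 6 statements merged into one kernel-verified Lean document; each statement's English description precedes it below -/
import Mathlib

section
/- Let a < b, let M ≥ 1, and let α_1, …, α_M : ℝ → ℝ be continuous basis functions. Suppose x_k : ℝ → ℝ satisfies exactly x_k(t) = Σ_{j=1}^{M} a_j α_j(t) on [a,b] for real coefficients a_1, …, a_M, and suppose x_{k−1} : ℝ → ℝ is continuously differentiable on [a,b], g_{k−1} : ℝ → ℝ is continuous, and ẋ_{k−1}(t) = x_k(t) + g_{k−1}(t) on [a,b]. Let φ_1, …, φ_M be modulating functions of order at least 1 on [a,b] such that the M × M matrix Θ with entries Θ_{ij} = ∫_a^b φ_i(t) α_j(t) dt is invertible. Then the coefficient vector is uniquely determined by the closed-form solution (a_1, …, a_M)^T = −Θ^{−1} v, where v_i = ∫_a^b φ_i'(t) x_{k−1}(t) dt + ∫_a^b φ_i(t) g_{k−1}(t) dt. -/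
/-- A modulating function of order `k` on `[a,b]`. -/
def IsModulatingOn (φ : ℝ → ℝ) (k : ℕ) (a b : ℝ) : Prop :=
  (∃ t ∈ Set.Icc a b, φ t ≠ 0) ∧ ContDiffOn ℝ k φ (Set.Icc a b) ∧
    ∀ i < k, iteratedDerivWithin i φ (Set.Icc a b) a = 0 ∧
      iteratedDerivWithin i φ (Set.Icc a b) b = 0

/-- closed-form solution for the coefficients of the basis decomposition of
the state `x_k`, `(a_1,…,a_M)ᵀ = −Θ⁻¹ v`, from the one-step modulated equations. -/
theorem state_coefficients_closed_form
    (a b : ℝ) (hab : a < b) (M : ℕ) (hM : 1 ≤ M)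
    (α : Fin M → ℝ → ℝ) (hα : ∀ j, Continuous (α j))
    (xk xkm1 gkm1 : ℝ → ℝ) (coef : Fin M → ℝ)
    (hrep : ∀ t ∈ Set.Icc a b, xk t = ∑ j, coef j * α j t)
    (hx : ContDiffOn ℝ 1 xkm1 (Set.Icc a b)) (hg : Continuous gkm1)
    (hsys : ∀ t ∈ Set.Icc a b,
      derivWithin xkm1 (Set.Icc a b) t = xk t + gkm1 t)
    (φ : Fin M → ℝ → ℝ) (l : Fin M → ℕ) (hl : ∀ i, 1 ≤ l i)
    (hφ : ∀ i, IsModulatingOn (φ i) (l i) a b)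
    (Θ : Matrix (Fin M) (Fin M) ℝ)
    (hΘ : Θ = Matrix.of fun i j => ∫ t in a..b, φ i t * α j t)
    (hinv : IsUnit Θ) :
    coef = -(Θ⁻¹.mulVec fun i =>
      (∫ t in a..b, derivWithin (φ i) (Set.Icc a b) t * xkm1 t) +
        ∫ t in a..b, φ i t * gkm1 t) := by
  have hab' : a ≤ b := hab.le
  have hud : UniqueDiffOn ℝ (Set.Icc a b) := uniqueDiffOn_Icc hab
  have huIcc : Set.uIcc a b = Set.Icc a b := Set.uIcc_of_le hab'
  -- continuity of pieces
  have hxc : ContinuousOn xkm1 (Set.Icc a b) := hx.continuousOn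
  have hxkc : ContinuousOn xk (Set.Icc a b) := by
    have : ContinuousOn (fun t => ∑ j, coef j * α j t) (Set.Icc a b) :=
      (continuous_finset_sum _ fun j _ => (continuous_const.mul (hα j))).continuousOn
    exact this.congr hrep
  have hx'c : ContinuousOn (derivWithin xkm1 (Set.Icc a b)) (Set.Icc a b) :=
    (hxkc.add hg.continuousOn).congr hsys
  have key : ∀ i, (∫ t in a..b, derivWithin (φ i) (Set.Icc a b) t * xkm1 t)
      + (∫ t in a..b, φ i t * gkm1 t) = -(Θ.mulVec coef i) := by
    intro i
    obtain ⟨-, hcd, hzero⟩ := hφ i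
    have h1 : (1 : WithTop ℕ∞) ≤ (l i : ℕ) := by exact_mod_cast hl i
    have hφc : ContinuousOn (φ i) (Set.Icc a b) := hcd.continuousOn
    have hφ'c : ContinuousOn (derivWithin (φ i) (Set.Icc a b)) (Set.Icc a b) :=
      hcd.continuousOn_derivWithin hud h1
    have hφa : φ i a = 0 := by
      have := (hzero 0 (hl i)).1
      simpa [iteratedDerivWithin_zero] using this
    have hφb : φ i b = 0 := by
      have := (hzero 0 (hl i)).2
      simpa [iteratedDerivWithin_zero] using this
    -- integrability
    have hint1 : IntervalIntegrable
        (fun t => derivWithin (φ i) (Set.Icc a b) t * xkm1 t) MeasureTheory.volume a b := by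
      apply ContinuousOn.intervalIntegrable
      rw [huIcc]; exact hφ'c.mul hxc
    have hint2 : IntervalIntegrable
        (fun t => φ i t * derivWithin xkm1 (Set.Icc a b) t) MeasureTheory.volume a b := by
      apply ContinuousOn.intervalIntegrable
      rw [huIcc]; exact hφc.mul hx'c
    have hint3 : IntervalIntegrable (fun t => φ i t * xk t) MeasureTheory.volume a b := by
      apply ContinuousOn.intervalIntegrable
      rw [huIcc]; exact hφc.mul hxkc
    have hint4 : IntervalIntegrable (fun t => φ i t * gkm1 t) MeasureTheory.volume a b := by
      apply ContinuousOn.intervalIntegrable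
      rw [huIcc]; exact hφc.mul hg.continuousOn
    -- integration by parts via FTC
    have hftc : (∫ t in a..b, (derivWithin (φ i) (Set.Icc a b) t * xkm1 t
        + φ i t * derivWithin xkm1 (Set.Icc a b) t)) = 0 := by
      have := intervalIntegral.integral_eq_sub_of_hasDeriv_right_of_le hab'
        (f := fun t => φ i t * xkm1 t)
        (f' := fun t => derivWithin (φ i) (Set.Icc a b) t * xkm1 t
          + φ i t * derivWithin xkm1 (Set.Icc a b) t)
        (hφc.mul hxc)
        (fun t ht => by
          have htI : t ∈ Set.Icc a b := Set.mem_Icc_of_Ioo ht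
          have hφd : HasDerivWithinAt (φ i) (derivWithin (φ i) (Set.Icc a b) t)
              (Set.Icc a b) t :=
            ((hcd.differentiableOn (by have := hl i; exact_mod_cast (show l i ≠ 0 by omega))) t htI).hasDerivWithinAt
          have hxd : HasDerivWithinAt xkm1 (derivWithin xkm1 (Set.Icc a b) t)
              (Set.Icc a b) t :=
            ((hx.differentiableOn one_ne_zero) t htI).hasDerivWithinAt
          have hmul := hφd.mul hxd
          have hnhds : Set.Icc a b ∈ nhds t := Icc_mem_nhds ht.1 ht.2
          exact (hmul.hasDerivAt hnhds).hasDerivWithinAt)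
        (hint1.add hint2)
      rw [this]; show φ i b * xkm1 b - φ i a * xkm1 a = 0; rw [hφa, hφb]; ring
    rw [intervalIntegral.integral_add hint1 hint2] at hftc
    have hsplit : (∫ t in a..b, φ i t * derivWithin xkm1 (Set.Icc a b) t)
        = (∫ t in a..b, φ i t * xk t) + ∫ t in a..b, φ i t * gkm1 t := by
      rw [← intervalIntegral.integral_add hint3 hint4]
      apply intervalIntegral.integral_congr
      intro t ht
      rw [huIcc] at ht
      show φ i t * derivWithin xkm1 (Set.Icc a b) t = φ i t * xk t + φ i t * gkm1 t
      rw [hsys t ht]; ring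
    have hΘv : (∫ t in a..b, φ i t * xk t) = Θ.mulVec coef i := by
      have hcongr : (∫ t in a..b, φ i t * xk t)
          = ∫ t in a..b, ∑ j, coef j * (φ i t * α j t) := by
        apply intervalIntegral.integral_congr
        intro t ht
        rw [huIcc] at ht
        show φ i t * xk t = ∑ j, coef j * (φ i t * α j t)
        rw [hrep t ht, Finset.mul_sum]
        exact Finset.sum_congr rfl fun j _ => by ring
      rw [hcongr, intervalIntegral.integral_finset_sum]
      · rw [hΘ, Matrix.mulVec]
        simp only [Matrix.of_apply, dotProduct]
        refine Finset.sum_congr rfl fun j _ => ?_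
        rw [intervalIntegral.integral_const_mul]
        ring
      · intro j _
        apply IntervalIntegrable.const_mul
        apply ContinuousOn.intervalIntegrable
        rw [huIcc]; exact hφc.mul (hα j).continuousOn
    rw [hsplit, hΘv] at hftc
    linarith
  have hv : (fun i => (∫ t in a..b, derivWithin (φ i) (Set.Icc a b) t * xkm1 t) +
      ∫ t in a..b, φ i t * gkm1 t) = -(Θ.mulVec coef) := by
    funext i
    simpa using key i
  rw [hv]
  have hdet : IsUnit Θ.det := (Matrix.isUnit_iff_isUnit_det Θ).mp hinv
  rw [Matrix.mulVec_neg, neg_neg, Matrix.mulVec_mulVec, Matrix.nonsing_inv_mul Θ hdet,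
    Matrix.one_mulVec]
end

section
/- Let a < b, let n ≥ 2 and 2 ≤ k ≤ n, and let x_1, …, x_n, g_1, …, g_{n−1} : ℝ → ℝ be n times continuously differentiable on [a,b] with ẋ_r(t) = x_{r+1}(t) + g_r(t) on [a,b] for r = 1, …, n−1. Suppose x_k(t) = Σ_{j=1}^{M} a_j α_j(t) on [a,b] for continuous basis functions α_1, …, α_M and real coefficients a_1, …, a_M. Let φ_1, …, φ_M be modulating functions of order at least k on [a,b] with the M × M matrix Θ, Θ_{ij} = ∫_a^b φ_i(t) α_j(t) dt, invertible. Then (a_1, …, a_M)^T = Θ^{−1} Ψ, where Ψ_i = (−1)^{k−1} ∫_a^b φ_i^((k−1))(t) x_1(t) dt − Σ_{r=1}^{k−1} (−1)^{k−1−r} ∫_a^b φ_i^((k−1−r))(t) g_r(t) dt. -/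
open Set intervalIntegral MeasureTheory

/-- Integration by parts with vanishing boundary terms. -/
lemma ibp_vanish {a b : ℝ} (hab : a ≤ b) {u v u' v' : ℝ → ℝ}
    (hu : ∀ t ∈ Icc a b, HasDerivWithinAt u (u' t) (Icc a b) t)
    (hv : ∀ t ∈ Icc a b, HasDerivWithinAt v (v' t) (Icc a b) t)
    (hu' : ContinuousOn u' (Icc a b)) (hv' : ContinuousOn v' (Icc a b))
    (ha : u a = 0) (hb : u b = 0) :
    ∫ t in a..b, u t * v' t = - ∫ t in a..b, u' t * v t := by
  have huIcc : Set.uIcc a b = Icc a b := uIcc_of_le hab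
  have hcu : ContinuousOn u (Icc a b) := fun t ht => (hu t ht).continuousWithinAt
  have hcv : ContinuousOn v (Icc a b) := fun t ht => (hv t ht).continuousWithinAt
  have hiu' : IntervalIntegrable u' volume a b :=
    (hu'.mono (le_of_eq huIcc)).intervalIntegrable
  have hiv' : IntervalIntegrable v' volume a b :=
    (hv'.mono (le_of_eq huIcc)).intervalIntegrable
  rw [← huIcc] at hu hv
  have key := integral_deriv_mul_eq_sub_of_hasDerivWithinAt
    (u := u) (v := v) (u' := u') (v' := v')
    (fun t ht => hu t (huIcc ▸ ht)) (fun t ht => hv t (huIcc ▸ ht)) hiu' hiv'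
  rw [ha, hb, zero_mul, zero_mul, sub_zero] at key
  have h1 : IntervalIntegrable (fun t => u' t * v t) volume a b :=
    ((hu'.mul hcv).mono (le_of_eq huIcc)).intervalIntegrable
  have h2 : IntervalIntegrable (fun t => u t * v' t) volume a b :=
    ((hcu.mul hv').mono (le_of_eq huIcc)).intervalIntegrable
  rw [integral_add h1 h2] at key
  linarith

lemma key_identity (a b : ℝ) (hab : a < b) (n : ℕ) (k : ℕ) (hk2 : 2 ≤ k) (hkn : k ≤ n)
    (x g : ℕ → ℝ → ℝ)
    (hx : ∀ r, 1 ≤ r → r ≤ n → ContDiffOn ℝ n (x r) (Set.Icc a b))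
    (hgc : ∀ r, 1 ≤ r → r ≤ n - 1 → ContinuousOn (g r) (Set.Icc a b))
    (hsys : ∀ r, 1 ≤ r → r ≤ n - 1 → ∀ t ∈ Set.Icc a b,
      derivWithin (x r) (Set.Icc a b) t = x (r + 1) t + g r t)
    (φ : ℝ → ℝ) (l : ℕ) (hl : k ≤ l)
    (hφc : ContDiffOn ℝ l φ (Set.Icc a b))
    (hφ0 : ∀ i < l, iteratedDerivWithin i φ (Set.Icc a b) a = 0 ∧
      iteratedDerivWithin i φ (Set.Icc a b) b = 0) :
    ∫ t in a..b, φ t * x k t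
      = (-1 : ℝ) ^ (k - 1) *
          (∫ t in a..b, iteratedDerivWithin (k - 1) φ (Set.Icc a b) t * x 1 t)
        - ∑ r ∈ Finset.Icc 1 (k - 1), (-1 : ℝ) ^ (k - 1 - r) *
            ∫ t in a..b, iteratedDerivWithin (k - 1 - r) φ (Set.Icc a b) t * g r t := by
  have hab' : a ≤ b := hab.le
  have huIcc : Set.uIcc a b = Set.Icc a b := uIcc_of_le hab'
  have unique : UniqueDiffOn ℝ (Set.Icc a b) := uniqueDiffOn_Icc hab
  set ψ : ℕ → ℝ → ℝ := fun s => iteratedDerivWithin s φ (Set.Icc a b) with hψ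
  have hψcont : ∀ s, s ≤ l → ContinuousOn (ψ s) (Set.Icc a b) := fun s hs =>
    hφc.continuousOn_iteratedDerivWithin (by exact_mod_cast hs) unique
  have hψderiv : ∀ s, s < l → ∀ t ∈ Set.Icc a b,
      HasDerivWithinAt (ψ s) (ψ (s+1) t) (Set.Icc a b) t := by
    intro s hs t ht
    have hdiff := hφc.differentiableOn_iteratedDerivWithin
      (m := s) (by exact_mod_cast hs) unique
    have := (hdiff t ht).hasDerivWithinAt
    rwa [← iteratedDerivWithin_succ] at this
  have H : ∀ d, d ≤ k - 1 →
      ∫ t in a..b, φ t * x k t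
        = (-1 : ℝ) ^ d * (∫ t in a..b, ψ d t * x (k - d) t)
          - ∑ r ∈ Finset.Icc (k - d) (k - 1), (-1 : ℝ) ^ (k - 1 - r) *
              ∫ t in a..b, ψ (k - 1 - r) t * g r t := by
    intro d hd
    induction d with
    | zero =>
      have h1 : Finset.Icc k (k - 1) = ∅ := Finset.Icc_eq_empty (by omega)
      simp [h1, hψ, iteratedDerivWithin_zero]
    | succ d IH =>
      have hd' : d ≤ k - 1 := by omega
      set r : ℕ := k - (d + 1) with hr
      have hr1 : 1 ≤ r := by omega
      have hrn : r ≤ n - 1 := by omega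
      have hkd : k - d = r + 1 := by omega
      -- regularity of x r and its derivative
      have hxr : ContDiffOn ℝ n (x r) (Set.Icc a b) := hx r hr1 (by omega)
      have hn1 : 1 ≤ n := by omega
      have hxderiv : ∀ t ∈ Set.Icc a b,
          HasDerivWithinAt (x r) (derivWithin (x r) (Set.Icc a b) t) (Set.Icc a b) t :=
        fun t ht => ((hxr.differentiableOn (by exact_mod_cast (show n ≠ 0 by omega))) t ht).hasDerivWithinAt
      have hcd : ContinuousOn (derivWithin (x r) (Set.Icc a b)) (Set.Icc a b) := by
        apply ContinuousOn.congr (((hx (r+1) (by omega) (by omega)).continuousOn).add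
          (hgc r hr1 hrn))
        intro t ht
        exact hsys r hr1 hrn t ht
      have hdl : d < l := by omega
      -- step 1: rewrite x (k - d) using the system
      have e1 : ∫ t in a..b, ψ d t * x (k - d) t
          = (∫ t in a..b, ψ d t * derivWithin (x r) (Set.Icc a b) t)
            - ∫ t in a..b, ψ d t * g r t := by
        have heq : ∀ t ∈ Set.Icc a b, ψ d t * x (k - d) t
            = ψ d t * derivWithin (x r) (Set.Icc a b) t - ψ d t * g r t := by
          intro t ht
          rw [hkd, hsys r hr1 hrn t ht]; ring
        rw [intervalIntegral.integral_congr (g := fun t =>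
            ψ d t * derivWithin (x r) (Set.Icc a b) t - ψ d t * g r t)
            (fun t ht => heq t (huIcc ▸ ht))]
        apply intervalIntegral.integral_sub
        · exact (((hψcont d (by omega)).mul hcd).mono (le_of_eq huIcc)).intervalIntegrable
        · exact (((hψcont d (by omega)).mul (hgc r hr1 hrn)).mono
            (le_of_eq huIcc)).intervalIntegrable
      -- step 2: integration by parts
      have e2 : ∫ t in a..b, ψ d t * derivWithin (x r) (Set.Icc a b) t
          = - ∫ t in a..b, ψ (d+1) t * x r t :=
        ibp_vanish hab' (hψderiv d hdl) hxderiv (hψcont (d+1) (by omega)) hcd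
          (hφ0 d hdl).1 (hφ0 d hdl).2
      -- sum manipulation
      have hins : Finset.Icc r (k - 1) = insert r (Finset.Icc (k - d) (k - 1)) := by
        ext m; simp only [Finset.mem_Icc, Finset.mem_insert]; omega
      have hnotmem : r ∉ Finset.Icc (k - d) (k - 1) := by
        simp only [Finset.mem_Icc]; omega
      have hexp : k - 1 - r = d := by omega
      rw [IH hd', e1, e2, hins, Finset.sum_insert hnotmem, hexp]
      ring
  have hfin := H (k - 1) le_rfl
  have h1 : k - (k - 1) = 1 := by omega
  rwa [h1] at hfin



theorem state_coefficients_output_only'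
    (a b : ℝ) (hab : a < b) (n : ℕ) (hn : 2 ≤ n)
    (k : ℕ) (hk2 : 2 ≤ k) (hkn : k ≤ n)
    (x g : ℕ → ℝ → ℝ)
    (hx : ∀ r, 1 ≤ r → r ≤ n → ContDiffOn ℝ n (x r) (Set.Icc a b))
    (hg : ∀ r, 1 ≤ r → r ≤ n - 1 → ContDiffOn ℝ n (g r) (Set.Icc a b))
    (hsys : ∀ r, 1 ≤ r → r ≤ n - 1 → ∀ t ∈ Set.Icc a b,
      derivWithin (x r) (Set.Icc a b) t = x (r + 1) t + g r t)
    (M : ℕ) (hM : 1 ≤ M) (α : Fin M → ℝ → ℝ) (hα : ∀ j, Continuous (α j))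
    (coef : Fin M → ℝ)
    (hrep : ∀ t ∈ Set.Icc a b, x k t = ∑ j, coef j * α j t)
    (φ : Fin M → ℝ → ℝ) (l : Fin M → ℕ) (hl : ∀ i, k ≤ l i)
    (hφ : ∀ i, (∃ t ∈ Set.Icc a b, φ i t ≠ 0) ∧ ContDiffOn ℝ (l i) (φ i) (Set.Icc a b) ∧
      ∀ s < l i, iteratedDerivWithin s (φ i) (Set.Icc a b) a = 0 ∧
        iteratedDerivWithin s (φ i) (Set.Icc a b) b = 0)
    (Θ : Matrix (Fin M) (Fin M) ℝ)
    (hΘ : Θ = Matrix.of fun i j => ∫ t in a..b, φ i t * α j t)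
    (hinv : IsUnit Θ) :
    coef = Θ⁻¹.mulVec fun i =>
      (-1 : ℝ) ^ (k - 1) *
          (∫ t in a..b, iteratedDerivWithin (k - 1) (φ i) (Set.Icc a b) t * x 1 t)
        - ∑ r ∈ Finset.Icc 1 (k - 1), (-1 : ℝ) ^ (k - 1 - r) *
            ∫ t in a..b, iteratedDerivWithin (k - 1 - r) (φ i) (Set.Icc a b) t * g r t := by
  have hab' : a ≤ b := hab.le
  have huIcc : Set.uIcc a b = Set.Icc a b := uIcc_of_le hab'
  have hΨ : (fun i =>
      (-1 : ℝ) ^ (k - 1) *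
          (∫ t in a..b, iteratedDerivWithin (k - 1) (φ i) (Set.Icc a b) t * x 1 t)
        - ∑ r ∈ Finset.Icc 1 (k - 1), (-1 : ℝ) ^ (k - 1 - r) *
            ∫ t in a..b, iteratedDerivWithin (k - 1 - r) (φ i) (Set.Icc a b) t * g r t)
      = Θ.mulVec coef := by
    funext i
    have hkey := key_identity a b hab n k hk2 hkn x g hx
      (fun r h1 h2 => (hg r h1 h2).continuousOn) hsys (φ i) (l i) (hl i)
      (hφ i).2.1 (hφ i).2.2
    have hφcont : ContinuousOn (φ i) (Set.Icc a b) := (hφ i).2.1.continuousOn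
    have hsum : ∫ t in a..b, φ i t * x k t
        = ∑ j, coef j * ∫ t in a..b, φ i t * α j t := by
      rw [intervalIntegral.integral_congr (g := fun t => ∑ j, coef j * (φ i t * α j t))
        (fun t ht => by rw [hrep t (huIcc ▸ ht), Finset.mul_sum]; congr 1; ext j; ring)]
      rw [intervalIntegral.integral_finset_sum]
      · exact Finset.sum_congr rfl fun j _ => intervalIntegral.integral_const_mul _ _
      · intro j _
        exact (((hφcont.mul (hα j).continuousOn).const_smul (coef j)).mono
          (le_of_eq huIcc)).intervalIntegrable
    rw [← hkey, hsum, Matrix.mulVec, hΘ]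
    simp only [dotProduct, Matrix.of_apply]
    exact Finset.sum_congr rfl fun j _ => mul_comm _ _
  rw [hΨ, Matrix.mulVec_mulVec,
    Matrix.nonsing_inv_mul Θ ((Matrix.isUnit_iff_isUnit_det Θ).mp hinv), Matrix.one_mulVec]

/-- output-only closed-form solution for the coefficients of the basis
decomposition of the state `x_k`, `(a_1,…,a_M)ᵀ = Θ⁻¹ Ψ`, with modulating functions of
order at least `k`. -/
theorem state_coefficients_output_only
    (a b : ℝ) (hab : a < b) (n : ℕ) (hn : 2 ≤ n)
    (k : ℕ) (hk2 : 2 ≤ k) (hkn : k ≤ n)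
    (x g : ℕ → ℝ → ℝ)
    (hx : ∀ r, 1 ≤ r → r ≤ n → ContDiffOn ℝ n (x r) (Set.Icc a b))
    (hg : ∀ r, 1 ≤ r → r ≤ n - 1 → ContDiffOn ℝ n (g r) (Set.Icc a b))
    (hsys : ∀ r, 1 ≤ r → r ≤ n - 1 → ∀ t ∈ Set.Icc a b,
      derivWithin (x r) (Set.Icc a b) t = x (r + 1) t + g r t)
    (M : ℕ) (hM : 1 ≤ M) (α : Fin M → ℝ → ℝ) (hα : ∀ j, Continuous (α j))
    (coef : Fin M → ℝ)
    (hrep : ∀ t ∈ Set.Icc a b, x k t = ∑ j, coef j * α j t)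
    (φ : Fin M → ℝ → ℝ) (l : Fin M → ℕ) (hl : ∀ i, k ≤ l i)
    (hφ : ∀ i, IsModulatingOn (φ i) (l i) a b)
    (Θ : Matrix (Fin M) (Fin M) ℝ)
    (hΘ : Θ = Matrix.of fun i j => ∫ t in a..b, φ i t * α j t)
    (hinv : IsUnit Θ) :
    coef = Θ⁻¹.mulVec fun i =>
      (-1 : ℝ) ^ (k - 1) *
          (∫ t in a..b, iteratedDerivWithin (k - 1) (φ i) (Set.Icc a b) t * x 1 t)
        - ∑ r ∈ Finset.Icc 1 (k - 1), (-1 : ℝ) ^ (k - 1 - r) *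
            ∫ t in a..b, iteratedDerivWithin (k - 1 - r) (φ i) (Set.Icc a b) t * g r t := by
  exact state_coefficients_output_only' a b hab n hn k hk2 hkn x g hx hg hsys
    M hM α hα coef hrep φ l hl (fun i => hφ i) Θ hΘ hinv
end

section
/- Let a < b, let N ≥ 1, and let β_1, …, β_N : ℝ → ℝ be continuous basis functions. Suppose the disturbance d : ℝ → ℝ satisfies exactly d(t) = Σ_{j=1}^{N} b_j β_j(t) on [a,b] for real coefficients b_1, …, b_N, and suppose x_n : ℝ → ℝ is continuously differentiable on [a,b], g_n : ℝ → ℝ is continuous, and ẋ_n(t) = g_n(t) + d(t) on [a,b]. Let φ_1, …, φ_N be modulating functions of order at least 1 on [a,b] such that the N × N matrix Θ_d with entries (Θ_d)_{ij} = ∫_a^b φ_i(t) β_j(t) dt is invertible. Then (b_1, …, b_N)^T = −Θ_d^{−1} w, where w_i = ∫_a^b φ_i'(t) x_n(t) dt + ∫_a^b φ_i(t) g_n(t) dt. -/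
set_option maxHeartbeats 1000000

open Set intervalIntegral

lemma ibp_aux (a b : ℝ) (hab : a < b) (u v : ℝ → ℝ)
    (hu : ContDiffOn ℝ 1 u (Icc a b)) (hv : ContDiffOn ℝ 1 v (Icc a b)) :
    ∫ t in a..b, (derivWithin u (Icc a b) t * v t + u t * derivWithin v (Icc a b) t)
      = u b * v b - u a * v a := by
  apply intervalIntegral.integral_eq_sub_of_hasDeriv_right_of_le hab.le
  · exact (hu.continuousOn.mul hv.continuousOn)
  · intro t ht
    have hmem : Icc a b ∈ nhds t := Icc_mem_nhds ht.1 ht.2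
    have h1 : HasDerivAt u (derivWithin u (Icc a b) t) t :=
      ((hu.differentiableOn one_ne_zero t (Ioo_subset_Icc_self ht)).hasDerivWithinAt).hasDerivAt hmem
    have h2 : HasDerivAt v (derivWithin v (Icc a b) t) t :=
      ((hv.differentiableOn one_ne_zero t (Ioo_subset_Icc_self ht)).hasDerivWithinAt).hasDerivAt hmem
    exact (h1.mul h2).hasDerivWithinAt
  · apply ContinuousOn.intervalIntegrable
    rw [uIcc_of_le hab.le]
    exact ((hu.continuousOn_derivWithin (uniqueDiffOn_Icc hab) le_rfl).mul hv.continuousOn).add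
      (hu.continuousOn.mul (hv.continuousOn_derivWithin (uniqueDiffOn_Icc hab) le_rfl))

/-- closed-form solution for the coefficients of the basis decomposition of
the disturbance `d`, `(b_1,…,b_N)ᵀ = −Θ_d⁻¹ w`, from the one-step modulated equations. -/
theorem disturbance_coefficients_closed_form
    (a b : ℝ) (hab : a < b) (N : ℕ) (hN : 1 ≤ N)
    (β : Fin N → ℝ → ℝ) (hβ : ∀ j, Continuous (β j))
    (xn gn d : ℝ → ℝ) (coef : Fin N → ℝ)
    (hrep : ∀ t ∈ Set.Icc a b, d t = ∑ j, coef j * β j t)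
    (hx : ContDiffOn ℝ 1 xn (Set.Icc a b)) (hg : Continuous gn)
    (hsys : ∀ t ∈ Set.Icc a b,
      derivWithin xn (Set.Icc a b) t = gn t + d t)
    (φ : Fin N → ℝ → ℝ) (l : Fin N → ℕ) (hl : ∀ i, 1 ≤ l i)
    (hφ : ∀ i, IsModulatingOn (φ i) (l i) a b)
    (Θd : Matrix (Fin N) (Fin N) ℝ)
    (hΘd : Θd = Matrix.of fun i j => ∫ t in a..b, φ i t * β j t)
    (hinv : IsUnit Θd) :
    coef = -(Θd⁻¹.mulVec fun i =>
      (∫ t in a..b, derivWithin (φ i) (Set.Icc a b) t * xn t) +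
        ∫ t in a..b, φ i t * gn t) := by
  set w : Fin N → ℝ := fun i =>
    (∫ t in a..b, derivWithin (φ i) (Set.Icc a b) t * xn t) +
      ∫ t in a..b, φ i t * gn t with hw
  have key : Θd.mulVec coef = -w := by
    funext i
    obtain ⟨-, hφc, hφz⟩ := hφ i
    have hφ1 : ContDiffOn ℝ 1 (φ i) (Icc a b) :=
      hφc.of_le (by exact_mod_cast hl i)
    have ha0 : φ i a = 0 := by
      have := (hφz 0 (hl i)).1; simpa using this
    have hb0 : φ i b = 0 := by
      have := (hφz 0 (hl i)).2; simpa using this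
    -- integration by parts
    have hibp := ibp_aux a b hab (φ i) xn hφ1 hx
    rw [ha0, hb0] at hibp
    simp only [zero_mul, sub_zero, sub_self] at hibp
    -- integrability facts
    have hcφ : ContinuousOn (φ i) (Icc a b) := hφ1.continuousOn
    have hInt1 : IntervalIntegrable
        (fun t => derivWithin (φ i) (Icc a b) t * xn t) MeasureTheory.volume a b := by
      apply ContinuousOn.intervalIntegrable
      rw [uIcc_of_le hab.le]
      exact (hφ1.continuousOn_derivWithin (uniqueDiffOn_Icc hab) le_rfl).mul hx.continuousOn
    have hInt2 : IntervalIntegrable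
        (fun t => φ i t * derivWithin xn (Icc a b) t) MeasureTheory.volume a b := by
      apply ContinuousOn.intervalIntegrable
      rw [uIcc_of_le hab.le]
      exact hcφ.mul (hx.continuousOn_derivWithin (uniqueDiffOn_Icc hab) le_rfl)
    rw [intervalIntegral.integral_add hInt1 hInt2] at hibp
    -- compute ∫ φ xn'
    have hIg : IntervalIntegrable (fun t => φ i t * gn t) MeasureTheory.volume a b := by
      apply ContinuousOn.intervalIntegrable
      rw [uIcc_of_le hab.le]
      exact hcφ.mul hg.continuousOn
    have hIβ : ∀ j : Fin N, IntervalIntegrable (fun t => coef j * (φ i t * β j t))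
        MeasureTheory.volume a b := by
      intro j
      apply ContinuousOn.intervalIntegrable
      rw [uIcc_of_le hab.le]
      exact continuousOn_const.mul (hcφ.mul (hβ j).continuousOn)
    have hIs : IntervalIntegrable (fun t => ∑ j, coef j * (φ i t * β j t))
        MeasureTheory.volume a b := by
      have h1 := IntervalIntegrable.sum (μ := MeasureTheory.volume) (a := a) (b := b)
        Finset.univ (f := fun j t => coef j * (φ i t * β j t)) (fun j _ => hIβ j)
      have h2 : (∑ j : Fin N, fun t => coef j * (φ i t * β j t))
          = fun t => ∑ j : Fin N, coef j * (φ i t * β j t) := by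
        funext t; simp
      rwa [h2] at h1
    have hsplit : (∫ t in a..b, φ i t * derivWithin xn (Icc a b) t)
        = (∫ t in a..b, φ i t * gn t) + ∑ j, coef j * ∫ t in a..b, φ i t * β j t := by
      have hcongr : (∫ t in a..b, φ i t * derivWithin xn (Icc a b) t)
          = ∫ t in a..b, (φ i t * gn t + ∑ j, coef j * (φ i t * β j t)) := by
        apply intervalIntegral.integral_congr
        intro t ht
        rw [uIcc_of_le hab.le] at ht
        dsimp only
        rw [hsys t ht, hrep t ht, mul_add, Finset.mul_sum]
        congr 1
        exact Finset.sum_congr rfl fun j _ => by ring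
      rw [hcongr, intervalIntegral.integral_add hIg hIs,
        intervalIntegral.integral_finset_sum (fun j _ => hIβ j)]
      congr 1
      exact Finset.sum_congr rfl fun j _ => by
        rw [intervalIntegral.integral_const_mul]
    rw [hsplit] at hibp
    have : (Θd.mulVec coef) i = ∑ j, coef j * ∫ t in a..b, φ i t * β j t := by
      simp [hΘd, Matrix.mulVec, dotProduct, mul_comm]
    rw [this]
    simp only [Pi.neg_apply, hw]
    linarith [hibp]
  have hdet : IsUnit Θd.det := (Matrix.isUnit_iff_isUnit_det Θd).mp hinv
  calc coef = (1 : Matrix (Fin N) (Fin N) ℝ).mulVec coef := by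
        rw [Matrix.one_mulVec]
    _ = (Θd⁻¹ * Θd).mulVec coef := by rw [Matrix.nonsing_inv_mul Θd hdet]
    _ = Θd⁻¹.mulVec (Θd.mulVec coef) := by rw [← Matrix.mulVec_mulVec]
    _ = Θd⁻¹.mulVec (-w) := by rw [key]
    _ = -(Θd⁻¹.mulVec w) := by rw [Matrix.mulVec_neg]
end

section
/- Let a < b, let n ≥ 2, and let x_1, …, x_n, g_1, …, g_n : ℝ → ℝ be n times continuously differentiable on [a,b] and d : ℝ → ℝ continuous, with ẋ_r(t) = x_{r+1}(t) + g_r(t) on [a,b] for r = 1, …, n−1 and ẋ_n(t) = g_n(t) + d(t) on [a,b]. Suppose d(t) = Σ_{j=1}^{N} b_j β_j(t) on [a,b] for continuous basis functions β_1, …, β_N and real coefficients b_1, …, b_N. Let φ_1, …, φ_N be modulating functions of order at least n on [a,b] with the N × N matrix Θ_d, (Θ_d)_{ij} = ∫_a^b φ_i(t) β_j(t) dt, invertible. Then (b_1, …, b_N)^T = Θ_d^{−1} w, where w_i = (−1)^n ∫_a^b φ_i^((n))(t) x_1(t) dt − Σ_{r=1}^{n} (−1)^{n−r} ∫_a^b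 φ_i^((n−r))(t) g_r(t) dt. -/
lemma ibp_zero (a b : ℝ) (hab : a ≤ b) (u v u' v' : ℝ → ℝ)
    (hu : ∀ t ∈ Set.Icc a b, HasDerivWithinAt u (u' t) (Set.Icc a b) t)
    (hv : ∀ t ∈ Set.Icc a b, HasDerivWithinAt v (v' t) (Set.Icc a b) t)
    (hu' : ContinuousOn u' (Set.Icc a b)) (hv' : ContinuousOn v' (Set.Icc a b))
    (hua : u a = 0) (hub : u b = 0) :
    ∫ t in a..b, u t * v' t = - ∫ t in a..b, u' t * v t := by
  have hucont : ContinuousOn u (Set.Icc a b) := fun t ht => (hu t ht).continuousWithinAt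
  have hvcont : ContinuousOn v (Set.Icc a b) := fun t ht => (hv t ht).continuousWithinAt
  have huIcc : Set.uIcc a b = Set.Icc a b := Set.uIcc_of_le hab
  have hint1 : IntervalIntegrable (fun t => u' t * v t) MeasureTheory.volume a b := by
    apply ContinuousOn.intervalIntegrable; rw [huIcc]; exact hu'.mul hvcont
  have hint2 : IntervalIntegrable (fun t => u t * v' t) MeasureTheory.volume a b := by
    apply ContinuousOn.intervalIntegrable; rw [huIcc]; exact hucont.mul hv'
  have key : ∫ t in a..b, (u' t * v t + u t * v' t) = u b * v b - u a * v a := by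
    apply intervalIntegral.integral_eq_sub_of_hasDeriv_right_of_le hab
      (hucont.mul hvcont)
    · intro t ht
      have h1 : HasDerivAt u (u' t) t :=
        (hu t (Set.mem_Icc_of_Ioo ht)).hasDerivAt (Icc_mem_nhds ht.1 ht.2)
      have h2 : HasDerivAt v (v' t) t :=
        (hv t (Set.mem_Icc_of_Ioo ht)).hasDerivAt (Icc_mem_nhds ht.1 ht.2)
      exact (h1.mul h2).hasDerivWithinAt
    · exact hint1.add hint2
  rw [intervalIntegral.integral_add hint1 hint2, hua, hub] at key
  simp at key
  linarith

lemma step_ibp (a b : ℝ) (hab : a < b) (L k : ℕ) (hk : k < L)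
    (Φ : ℝ → ℝ) (hΦ : ContDiffOn ℝ L Φ (Set.Icc a b))
    (hbd : ∀ i < L, iteratedDerivWithin i Φ (Set.Icc a b) a = 0 ∧
      iteratedDerivWithin i Φ (Set.Icc a b) b = 0)
    (y : ℝ → ℝ) (hy : ContDiffOn ℝ 1 y (Set.Icc a b)) :
    ∫ t in a..b, iteratedDerivWithin k Φ (Set.Icc a b) t * derivWithin y (Set.Icc a b) t
      = - ∫ t in a..b, iteratedDerivWithin (k+1) Φ (Set.Icc a b) t * y t := by
  have hs : UniqueDiffOn ℝ (Set.Icc a b) := uniqueDiffOn_Icc hab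
  apply ibp_zero a b hab.le _ y _ _
  · intro t ht
    have hdiff : DifferentiableWithinAt ℝ (iteratedDerivWithin k Φ (Set.Icc a b))
        (Set.Icc a b) t :=
      (hΦ.differentiableOn_iteratedDerivWithin (by exact_mod_cast hk) hs) t ht
    have := hdiff.hasDerivWithinAt
    rwa [← iteratedDerivWithin_succ] at this
  · intro t ht
    exact ((hy.differentiableOn one_ne_zero) t ht).hasDerivWithinAt
  · exact hΦ.continuousOn_iteratedDerivWithin (by exact_mod_cast hk) hs
  · exact hy.continuousOn_derivWithin hs le_rfl
  · exact (hbd k hk).1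
  · exact (hbd k hk).2



/-- output-only closed-form solution for the coefficients of the basis
decomposition of the disturbance, `(b_1,…,b_N)ᵀ = Θ_d⁻¹ w`, with modulating functions of
order at least `n`. -/
theorem disturbance_coefficients_output_only
    (a b : ℝ) (hab : a < b) (n : ℕ) (hn : 2 ≤ n)
    (x g : ℕ → ℝ → ℝ) (d : ℝ → ℝ) (hd : Continuous d)
    (hx : ∀ r, 1 ≤ r → r ≤ n → ContDiffOn ℝ n (x r) (Set.Icc a b))
    (hg : ∀ r, 1 ≤ r → r ≤ n → ContDiffOn ℝ n (g r) (Set.Icc a b))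
    (hsys : ∀ r, 1 ≤ r → r ≤ n - 1 → ∀ t ∈ Set.Icc a b,
      derivWithin (x r) (Set.Icc a b) t = x (r + 1) t + g r t)
    (hlast : ∀ t ∈ Set.Icc a b,
      derivWithin (x n) (Set.Icc a b) t = g n t + d t)
    (N : ℕ) (hN : 1 ≤ N) (β : Fin N → ℝ → ℝ) (hβ : ∀ j, Continuous (β j))
    (coef : Fin N → ℝ)
    (hrep : ∀ t ∈ Set.Icc a b, d t = ∑ j, coef j * β j t)
    (φ : Fin N → ℝ → ℝ) (l : Fin N → ℕ) (hl : ∀ i, n ≤ l i)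
    (hφ : ∀ i, IsModulatingOn (φ i) (l i) a b)
    (Θd : Matrix (Fin N) (Fin N) ℝ)
    (hΘd : Θd = Matrix.of fun i j => ∫ t in a..b, φ i t * β j t)
    (hinv : IsUnit Θd) :
    coef = Θd⁻¹.mulVec fun i =>
      (-1 : ℝ) ^ n * (∫ t in a..b, iteratedDerivWithin n (φ i) (Set.Icc a b) t * x 1 t)
        - ∑ r ∈ Finset.Icc 1 n, (-1 : ℝ) ^ (n - r) *
            ∫ t in a..b, iteratedDerivWithin (n - r) (φ i) (Set.Icc a b) t * g r t := by
  have hs : UniqueDiffOn ℝ (Set.Icc a b) := uniqueDiffOn_Icc hab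
  have huIcc : Set.uIcc a b = Set.Icc a b := Set.uIcc_of_le hab.le
  have hInt : ∀ f h : ℝ → ℝ, ContinuousOn f (Set.Icc a b) → ContinuousOn h (Set.Icc a b) →
      IntervalIntegrable (fun t => f t * h t) MeasureTheory.volume a b := by
    intro f h hf hh
    apply ContinuousOn.intervalIntegrable; rw [huIcc]; exact hf.mul hh
  have hφcont : ∀ (i : Fin N) (k : ℕ), k ≤ n →
      ContinuousOn (iteratedDerivWithin k (φ i) (Set.Icc a b)) (Set.Icc a b) := by
    intro i k hk
    exact (hφ i).2.1.continuousOn_iteratedDerivWithin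
      (by exact_mod_cast le_trans hk (hl i)) hs
  have hxcont : ∀ r, 1 ≤ r → r ≤ n → ContinuousOn (x r) (Set.Icc a b) :=
    fun r h1 h2 => (hx r h1 h2).continuousOn
  have hgcont : ∀ r, 1 ≤ r → r ≤ n → ContinuousOn (g r) (Set.Icc a b) :=
    fun r h1 h2 => (hg r h1 h2).continuousOn
  have hdxcont : ∀ r, 1 ≤ r → r ≤ n →
      ContinuousOn (derivWithin (x r) (Set.Icc a b)) (Set.Icc a b) := by
    intro r h1 h2
    exact (hx r h1 h2).continuousOn_derivWithin hs (by exact_mod_cast (by omega : 1 ≤ n))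
  have hx1 : ∀ r, 1 ≤ r → r ≤ n → ContDiffOn ℝ 1 (x r) (Set.Icc a b) :=
    fun r h1 h2 => (hx r h1 h2).of_le (by exact_mod_cast (by omega : 1 ≤ n))
  -- key inductive identity
  have key : ∀ m, 1 ≤ m → m ≤ n → ∀ i : Fin N,
      (∫ t in a..b, φ i t * d t)
        = ((-1:ℝ)^m *
            (∫ t in a..b, iteratedDerivWithin m (φ i) (Set.Icc a b) t * x (n - m + 1) t))
          - ∑ r ∈ Finset.Icc (n - m + 1) n, (-1:ℝ)^(n - r) *
              ∫ t in a..b, iteratedDerivWithin (n - r) (φ i) (Set.Icc a b) t * g r t := by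
    intro m
    induction m with
    | zero => omega
    | succ m ih =>
      intro _ hm1 i
      have hbd := fun j hj => (hφ i).2.2 j hj
      rcases Nat.eq_zero_or_pos m with hm0 | hmpos
      · -- base case m + 1 = 1
        subst hm0
        have hstep := step_ibp a b hab (l i) 0 (by have := hl i; omega) (φ i) (hφ i).2.1
          hbd (x n) (hx1 n (by omega) le_rfl)
        have hcongr : (∫ t in a..b, φ i t * d t)
            = ∫ t in a..b, (iteratedDerivWithin 0 (φ i) (Set.Icc a b) t *
                derivWithin (x n) (Set.Icc a b) t - φ i t * g n t) := by
          apply intervalIntegral.integral_congr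
          intro t ht
          rw [huIcc] at ht
          simp only [iteratedDerivWithin_zero]
          rw [hlast t ht]; ring
        have hi1 : IntervalIntegrable
            (fun t => iteratedDerivWithin 0 (φ i) (Set.Icc a b) t *
              derivWithin (x n) (Set.Icc a b) t) MeasureTheory.volume a b :=
          hInt _ _ (hφcont i 0 (by omega)) (hdxcont n (by omega) le_rfl)
        have hi2 : IntervalIntegrable (fun t => φ i t * g n t) MeasureTheory.volume a b :=
          hInt _ _ (hφ i).2.1.continuousOn (hgcont n (by omega) le_rfl)
        rw [hcongr, intervalIntegral.integral_sub hi1 hi2, hstep]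
        have e1 : n - (0 + 1) + 1 = n := by omega
        rw [e1, Finset.Icc_self, Finset.sum_singleton, Nat.sub_self]
        simp only [iteratedDerivWithin_zero, pow_zero, zero_add, pow_one, one_mul,
          neg_one_mul]
      · -- inductive step
        have ihm := ih hmpos (by omega) i
        have hstep := step_ibp a b hab (l i) m (by have := hl i; omega) (φ i) (hφ i).2.1
          hbd (x (n - m)) (hx1 (n - m) (by omega) (by omega))
        have hsplit : (∫ t in a..b,
              iteratedDerivWithin m (φ i) (Set.Icc a b) t * x (n - m + 1) t)
            = (∫ t in a..b, iteratedDerivWithin m (φ i) (Set.Icc a b) t *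
                derivWithin (x (n - m)) (Set.Icc a b) t)
              - ∫ t in a..b, iteratedDerivWithin m (φ i) (Set.Icc a b) t * g (n - m) t := by
          rw [← intervalIntegral.integral_sub
            (hInt _ _ (hφcont i m (by omega)) (hdxcont (n - m) (by omega) (by omega)))
            (hInt _ _ (hφcont i m (by omega)) (hgcont (n - m) (by omega) (by omega)))]
          apply intervalIntegral.integral_congr
          intro t ht
          rw [huIcc] at ht
          simp only [hsys (n - m) (by omega) (by omega) t ht]
          ring
        have e1 : n - (m + 1) + 1 = n - m := by omega
        have e2 : n - (n - m) = m := by omega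
        have hsum : Finset.Icc (n - m) n
            = insert (n - m) (Finset.Icc (n - m + 1) n) := by
          ext r; simp only [Finset.mem_Icc, Finset.mem_insert]; omega
        rw [e1, hsum, Finset.sum_insert (by simp only [Finset.mem_Icc]; omega), e2,
          ihm, hsplit, hstep, pow_succ]
        ring
  -- the modulated equation
  have hw : Θd.mulVec coef = fun i =>
      (-1 : ℝ) ^ n * (∫ t in a..b, iteratedDerivWithin n (φ i) (Set.Icc a b) t * x 1 t)
        - ∑ r ∈ Finset.Icc 1 n, (-1 : ℝ) ^ (n - r) *
            ∫ t in a..b, iteratedDerivWithin (n - r) (φ i) (Set.Icc a b) t * g r t := by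
    funext i
    have hkey := key n (by omega) le_rfl i
    have e1 : n - n + 1 = 1 := by omega
    rw [e1] at hkey
    have hint : ∀ j : Fin N, IntervalIntegrable
        (fun t => coef j * (φ i t * β j t)) MeasureTheory.volume a b := by
      intro j
      have := (hInt _ _ (hφ i).2.1.continuousOn (hβ j).continuousOn).const_mul (coef j)
      simpa [mul_assoc] using this
    have hsumInt : ∑ j : Fin N, coef j * ∫ t in a..b, φ i t * β j t
        = ∫ t in a..b, φ i t * d t := by
      have h1 : ∀ j ∈ Finset.univ, coef j * (∫ t in a..b, φ i t * β j t)
          = ∫ t in a..b, coef j * (φ i t * β j t) :=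
        fun j _ => (intervalIntegral.integral_const_mul _ _).symm
      rw [Finset.sum_congr rfl h1,
        ← intervalIntegral.integral_finset_sum (fun j _ => hint j)]
      apply intervalIntegral.integral_congr
      intro t ht
      rw [huIcc] at ht
      simp only [hrep t ht, Finset.mul_sum]
      exact Finset.sum_congr rfl fun j _ => by ring
    calc Θd.mulVec coef i = ∑ j : Fin N, (∫ t in a..b, φ i t * β j t) * coef j := by
          simp [Matrix.mulVec, dotProduct, hΘd]
      _ = ∑ j : Fin N, coef j * ∫ t in a..b, φ i t * β j t :=
          Finset.sum_congr rfl fun j _ => by ring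
      _ = ∫ t in a..b, φ i t * d t := hsumInt
      _ = _ := hkey
  have hdet : IsUnit Θd.det := (Matrix.isUnit_iff_isUnit_det Θd).mp hinv
  rw [← hw, Matrix.mulVec_mulVec, Matrix.nonsing_inv_mul Θd hdet, Matrix.one_mulVec]
end

section
/- Let a < b, let n ≥ 2 and 2 ≤ k ≤ n, let x_1, …, x_n, g_1, …, g_{n−1} : ℝ → ℝ be n times continuously differentiable on [a,b] with ẋ_r(t) = x_{r+1}(t) + g_r(t) on [a,b] for r = 1, …, n−1, and let φ be a modulating function of order at least k on [a,b]. Then the two modulated expressions for x_k agree: −∫_a^b φ'(t) x_{k−1}(t) dt − ∫_a^b φ(t) g_{k−1}(t) dt = (−1)^{k−1} ∫_a^b φ^((k−1))(t) x_1(t) dt − Σ_{r=1}^{k−1} (−1)^{k−1−r} ∫_a^b φ^((k−1−r))(t) g_r(t) dt, i.e. the one-step algebraic system and the output-only algebraic system for the coefficients of x_k have identical right-hand sides. -/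
/-- the one-step and the output-only modulated expressions for the state
`x_k` of the triangular system coincide. -/
theorem one_step_eq_output_only_state
    (a b : ℝ) (hab : a < b) (n : ℕ) (hn : 2 ≤ n)
    (k : ℕ) (hk2 : 2 ≤ k) (hkn : k ≤ n)
    (x g : ℕ → ℝ → ℝ)
    (hx : ∀ r, 1 ≤ r → r ≤ n → ContDiffOn ℝ n (x r) (Set.Icc a b))
    (hg : ∀ r, 1 ≤ r → r ≤ n - 1 → ContDiffOn ℝ n (g r) (Set.Icc a b))
    (hsys : ∀ r, 1 ≤ r → r ≤ n - 1 → ∀ t ∈ Set.Icc a b,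
      derivWithin (x r) (Set.Icc a b) t = x (r + 1) t + g r t)
    (φ : ℝ → ℝ) (l : ℕ) (hl : k ≤ l) (hφ : IsModulatingOn φ l a b) :
    -(∫ t in a..b, derivWithin φ (Set.Icc a b) t * x (k - 1) t)
        - ∫ t in a..b, φ t * g (k - 1) t =
      (-1 : ℝ) ^ (k - 1) *
          (∫ t in a..b, iteratedDerivWithin (k - 1) φ (Set.Icc a b) t * x 1 t)
        - ∑ r ∈ Finset.Icc 1 (k - 1), (-1 : ℝ) ^ (k - 1 - r) *
            ∫ t in a..b, iteratedDerivWithin (k - 1 - r) φ (Set.Icc a b) t * g r t := by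
  have hab' : a ≤ b := hab.le
  set I := Set.Icc a b with hI
  have hU : UniqueDiffOn ℝ I := uniqueDiffOn_Icc hab
  have huIcc : Set.uIcc a b = I := Set.uIcc_of_le hab'
  obtain ⟨-, hφc, hφ0⟩ := hφ
  -- interval integrability of products of continuous functions
  have hII : ∀ u v : ℝ → ℝ, ContinuousOn u I → ContinuousOn v I →
      IntervalIntegrable (fun t => u t * v t) MeasureTheory.volume a b := by
    intro u v hu hv
    apply ContinuousOn.intervalIntegrable
    rw [huIcc]; exact hu.mul hv
  have hφcont : ∀ j : ℕ, j ≤ l → ContinuousOn (iteratedDerivWithin j φ I) I := by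
    intro j hj
    exact hφc.continuousOn_iteratedDerivWithin (by exact_mod_cast hj) hU
  -- integration by parts step
  have ibp : ∀ j : ℕ, j + 1 ≤ l → ∀ ψ ψ' : ℝ → ℝ, ContinuousOn ψ' I →
      (∀ t ∈ I, HasDerivWithinAt ψ (ψ' t) I t) →
      (∫ t in a..b, iteratedDerivWithin j φ I t * ψ' t)
        = -∫ t in a..b, iteratedDerivWithin (j + 1) φ I t * ψ t := by
    intro j hj ψ ψ' hψ' hd
    have hψcont : ContinuousOn ψ I := fun t ht => (hd t ht).continuousWithinAt
    have hu : ∀ t ∈ Set.uIcc a b, HasDerivWithinAt (iteratedDerivWithin j φ I)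
        (iteratedDerivWithin (j + 1) φ I t) (Set.uIcc a b) t := by
      rw [huIcc]
      intro t ht
      have hdiff : DifferentiableOn ℝ (iteratedDerivWithin j φ I) I :=
        hφc.differentiableOn_iteratedDerivWithin (by exact_mod_cast Nat.lt_of_succ_le hj) hU
      have := (hdiff t ht).hasDerivWithinAt
      rwa [← iteratedDerivWithin_succ] at this
    have hv : ∀ t ∈ Set.uIcc a b, HasDerivWithinAt ψ (ψ' t) (Set.uIcc a b) t := by
      rw [huIcc]; exact hd
    have hInt1 : IntervalIntegrable (iteratedDerivWithin (j + 1) φ I) MeasureTheory.volume a b := by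
      apply ContinuousOn.intervalIntegrable
      rw [huIcc]; exact hφcont (j + 1) hj
    have hInt2 : IntervalIntegrable ψ' MeasureTheory.volume a b := by
      apply ContinuousOn.intervalIntegrable
      rw [huIcc]; exact hψ'
    have key := intervalIntegral.integral_deriv_mul_eq_sub_of_hasDerivWithinAt hu hv hInt1 hInt2
    have hja : iteratedDerivWithin j φ I a = 0 := (hφ0 j (Nat.lt_of_succ_le hj)).1
    have hjb : iteratedDerivWithin j φ I b = 0 := (hφ0 j (Nat.lt_of_succ_le hj)).2
    rw [hja, hjb] at key
    have hsplit := intervalIntegral.integral_add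
      (hII _ _ (hφcont (j + 1) hj) hψcont) (hII _ _ (hφcont j (by omega)) hψ')
    rw [hsplit] at key
    linarith
  -- main induction
  have main : ∀ j : ℕ, 1 ≤ j → j ≤ k - 1 →
      -(∫ t in a..b, derivWithin φ I t * x (k - 1) t)
          - ∫ t in a..b, φ t * g (k - 1) t =
        (-1 : ℝ) ^ j * (∫ t in a..b, iteratedDerivWithin j φ I t * x (k - j) t)
          - ∑ r ∈ Finset.Icc (k - j) (k - 1), (-1 : ℝ) ^ (k - 1 - r) *
              ∫ t in a..b, iteratedDerivWithin (k - 1 - r) φ I t * g r t := by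
    intro j
    induction j with
    | zero => omega
    | succ m ih =>
      intro _ hm1
      rcases Nat.eq_zero_or_pos m with hm0 | hmpos
      · -- base case j = 1
        subst hm0
        have hkk : k - (0 + 1) = k - 1 := by norm_num
        rw [hkk, Finset.Icc_self, Finset.sum_singleton]
        have h0 : k - 1 - (k - 1) = 0 := by omega
        rw [h0, iteratedDerivWithin_zero, pow_zero, one_mul, pow_one]
        have h1 : (∫ t in a..b, iteratedDerivWithin (0 + 1) φ I t * x (k - 1) t)
            = ∫ t in a..b, derivWithin φ I t * x (k - 1) t := by
          apply intervalIntegral.integral_congr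
          intro t ht
          rw [huIcc] at ht
          show iteratedDerivWithin (0 + 1) φ I t * x (k - 1) t = derivWithin φ I t * x (k - 1) t
          rw [zero_add, iteratedDerivWithin_one]
        rw [h1]; ring
      · -- inductive step
        have hstep := ih hmpos (by omega)
        set r0 := k - m - 1 with hr0
        have hr01 : 1 ≤ r0 := by omega
        have hr0n : r0 ≤ n - 1 := by omega
        have hr0s : r0 + 1 = k - m := by omega
        have hkm1 : 1 ≤ k - m := by omega
        have hkmn : k - m ≤ n := by omega
        -- IBP applied to ψ = x r0
        have hd : ∀ t ∈ I, HasDerivWithinAt (x r0) (x (k - m) t + g r0 t) I t := by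
          intro t ht
          have hdiff : DifferentiableOn ℝ (x r0) I :=
            (hx r0 hr01 (by omega)).differentiableOn (by exact_mod_cast by omega)
          have := (hdiff t ht).hasDerivWithinAt
          rwa [hsys r0 hr01 hr0n t ht, hr0s] at this
        have hcψ' : ContinuousOn (fun t => x (k - m) t + g r0 t) I :=
          (hx (k - m) hkm1 hkmn).continuousOn.add (hg r0 hr01 hr0n).continuousOn
        have hibp := ibp m (by omega) (x r0) _ hcψ' hd
        have hsplit : (∫ t in a..b, iteratedDerivWithin m φ I t * (x (k - m) t + g r0 t))
            = (∫ t in a..b, iteratedDerivWithin m φ I t * x (k - m) t)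
              + ∫ t in a..b, iteratedDerivWithin m φ I t * g r0 t := by
          rw [← intervalIntegral.integral_add
            (hII _ _ (hφcont m (by omega)) (hx (k - m) hkm1 hkmn).continuousOn)
            (hII _ _ (hφcont m (by omega)) (hg r0 hr01 hr0n).continuousOn)]
          apply intervalIntegral.integral_congr
          intro t _; ring
        rw [hsplit] at hibp
        -- split off the bottom of the new sum
        have hkm : k - (m + 1) = r0 := by omega
        have hins : insert r0 (Finset.Icc (r0 + 1) (k - 1)) = Finset.Icc r0 (k - 1) :=
          Finset.insert_Icc_add_one_left_eq_Icc (by omega)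
        have hnot : r0 ∉ Finset.Icc (r0 + 1) (k - 1) := by
          simp [Finset.mem_Icc]
        have hsum : (∑ r ∈ Finset.Icc (k - (m + 1)) (k - 1), (-1 : ℝ) ^ (k - 1 - r) *
              ∫ t in a..b, iteratedDerivWithin (k - 1 - r) φ I t * g r t)
            = (-1 : ℝ) ^ m * (∫ t in a..b, iteratedDerivWithin m φ I t * g r0 t)
              + ∑ r ∈ Finset.Icc (k - m) (k - 1), (-1 : ℝ) ^ (k - 1 - r) *
                  ∫ t in a..b, iteratedDerivWithin (k - 1 - r) φ I t * g r t := by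
          rw [hkm, ← hins, Finset.sum_insert hnot, hr0s]
          have hm' : k - 1 - r0 = m := by omega
          rw [hm']
        rw [hsum, hstep]
        have hAm : (∫ t in a..b, iteratedDerivWithin m φ I t * x (k - m) t)
            = -(∫ t in a..b, iteratedDerivWithin (m + 1) φ I t * x r0 t)
              - ∫ t in a..b, iteratedDerivWithin m φ I t * g r0 t := by
          linarith
        have hkm' : k - (m + 1) = r0 := hkm
        rw [hkm', hAm]
        ring
  have := main (k - 1) (by omega) le_rfl
  have hk1 : k - (k - 1) = 1 := by omega
  rw [hk1] at this
  exact this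
end

section
/- Let a < b, let n ≥ 2, let x_1, …, x_n, g_1, …, g_n : ℝ → ℝ be n times continuously differentiable on [a,b] and d : ℝ → ℝ continuous, with ẋ_r(t) = x_{r+1}(t) + g_r(t) on [a,b] for r = 1, …, n−1 and ẋ_n(t) = g_n(t) + d(t) on [a,b], and let φ be a modulating function of order at least n on [a,b]. Then the two modulated expressions for the disturbance agree: −∫_a^b φ'(t) x_n(t) dt − ∫_a^b φ(t) g_n(t) dt = (−1)^n ∫_a^b φ^((n))(t) x_1(t) dt − Σ_{r=1}^{n} (−1)^{n−r} ∫_a^b φ^((n−r))(t) g_r(t) dt. -/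
open Set intervalIntegral MeasureTheory

/-- Integration-by-parts step: if `F` vanishes at the endpoints, `F' = G` and `u' = v + w`
on the open interval, then `∫ F v = -∫ G u - ∫ F w`. -/
lemma ibp_step (a b : ℝ) (hab : a < b) (F G u v w : ℝ → ℝ)
    (hFa : F a = 0) (hFb : F b = 0)
    (hF : ContinuousOn F (Set.Icc a b)) (hG : ContinuousOn G (Set.Icc a b))
    (hu : ContinuousOn u (Set.Icc a b)) (hv : ContinuousOn v (Set.Icc a b))
    (hw : ContinuousOn w (Set.Icc a b))
    (hFd : ∀ t ∈ Set.Ioo a b, HasDerivAt F (G t) t)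
    (hud : ∀ t ∈ Set.Ioo a b, HasDerivAt u (v t + w t) t) :
    ∫ t in a..b, F t * v t = -(∫ t in a..b, G t * u t) - ∫ t in a..b, F t * w t := by
  have huIcc : Set.uIcc a b = Set.Icc a b := Set.uIcc_of_le hab.le
  have hGu : IntervalIntegrable (fun t => G t * u t) volume a b :=
    ((hG.mul hu).mono huIcc.subset).intervalIntegrable
  have hFv : IntervalIntegrable (fun t => F t * v t) volume a b :=
    ((hF.mul hv).mono huIcc.subset).intervalIntegrable
  have hFw : IntervalIntegrable (fun t => F t * w t) volume a b :=
    ((hF.mul hw).mono huIcc.subset).intervalIntegrable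
  have hHd : ∀ t ∈ Set.Ioo a b,
      HasDerivAt (fun s => F s * u s) (G t * u t + (F t * v t + F t * w t)) t := by
    intro t ht
    have := (hFd t ht).mul (hud t ht)
    exact this.congr_deriv (by ring)
  have hHcont : ContinuousOn (fun s => F s * u s) (Set.Icc a b) := hF.mul hu
  have hint : IntervalIntegrable (fun t => G t * u t + (F t * v t + F t * w t)) volume a b :=
    hGu.add (hFv.add hFw)
  have h0 : ∫ t in a..b, (G t * u t + (F t * v t + F t * w t)) =
      F b * u b - F a * u a :=
    integral_eq_sub_of_hasDerivAt_of_le hab.le hHcont hHd hint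
  rw [intervalIntegral.integral_add hGu (hFv.add hFw),
    intervalIntegral.integral_add hFv hFw, hFa, hFb] at h0
  linarith

/-- the one-step and the output-only modulated expressions for the
disturbance of the triangular system coincide. -/
theorem one_step_eq_output_only_disturbance
    (a b : ℝ) (hab : a < b) (n : ℕ) (hn : 2 ≤ n)
    (x g : ℕ → ℝ → ℝ) (d : ℝ → ℝ) (hd : Continuous d)
    (hx : ∀ r, 1 ≤ r → r ≤ n → ContDiffOn ℝ n (x r) (Set.Icc a b))
    (hg : ∀ r, 1 ≤ r → r ≤ n → ContDiffOn ℝ n (g r) (Set.Icc a b))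
    (hsys : ∀ r, 1 ≤ r → r ≤ n - 1 → ∀ t ∈ Set.Icc a b,
      derivWithin (x r) (Set.Icc a b) t = x (r + 1) t + g r t)
    (hlast : ∀ t ∈ Set.Icc a b,
      derivWithin (x n) (Set.Icc a b) t = g n t + d t)
    (φ : ℝ → ℝ) (l : ℕ) (hl : n ≤ l) (hφ : IsModulatingOn φ l a b) :
    -(∫ t in a..b, derivWithin φ (Set.Icc a b) t * x n t)
        - ∫ t in a..b, φ t * g n t =
      (-1 : ℝ) ^ n *
          (∫ t in a..b, iteratedDerivWithin n φ (Set.Icc a b) t * x 1 t)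
        - ∑ r ∈ Finset.Icc 1 n, (-1 : ℝ) ^ (n - r) *
            ∫ t in a..b, iteratedDerivWithin (n - r) φ (Set.Icc a b) t * g r t := by
  obtain ⟨-, hφcd, hφ0⟩ := hφ
  set s := Set.Icc a b with hs
  have hus : UniqueDiffOn ℝ s := uniqueDiffOn_Icc hab
  -- continuity of iterated derivatives of φ up to order l
  have hφcont : ∀ k, k ≤ l → ContinuousOn (iteratedDerivWithin k φ s) s := fun k hk =>
    hφcd.continuousOn_iteratedDerivWithin (by exact_mod_cast hk) hus
  -- HasDerivAt for iterated derivatives at interior points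
  have hφder : ∀ k, k < l → ∀ t ∈ Set.Ioo a b,
      HasDerivAt (iteratedDerivWithin k φ s) (iteratedDerivWithin (k + 1) φ s t) t := by
    intro k hk t ht
    have hts : t ∈ s := Set.Ioo_subset_Icc_self ht
    have hdiff : DifferentiableWithinAt ℝ (iteratedDerivWithin k φ s) s t :=
      (hφcd.differentiableOn_iteratedDerivWithin (by exact_mod_cast hk) hus) t hts
    have h1 : HasDerivWithinAt (iteratedDerivWithin k φ s)
        (derivWithin (iteratedDerivWithin k φ s) s t) s t := hdiff.hasDerivWithinAt
    rw [← iteratedDerivWithin_succ] at h1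
    exact h1.hasDerivAt (Icc_mem_nhds ht.1 ht.2)
  -- HasDerivAt for each state x r (1 ≤ r ≤ n-1) at interior points
  have hxder : ∀ r, 1 ≤ r → r ≤ n - 1 → ∀ t ∈ Set.Ioo a b,
      HasDerivAt (x r) (x (r + 1) t + g r t) t := by
    intro r hr1 hrn t ht
    have hts : t ∈ s := Set.Ioo_subset_Icc_self ht
    have hdiff : DifferentiableWithinAt ℝ (x r) s t :=
      ((hx r hr1 (le_trans hrn (Nat.sub_le n 1))).differentiableOn
        (by exact_mod_cast (show n ≠ 0 by omega))) t hts
    have h1 : HasDerivWithinAt (x r) (derivWithin (x r) s t) s t := hdiff.hasDerivWithinAt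
    rw [hsys r hr1 hrn t hts] at h1
    exact h1.hasDerivAt (Icc_mem_nhds ht.1 ht.2)
  have hxcont : ∀ r, 1 ≤ r → r ≤ n → ContinuousOn (x r) s := fun r h1 h2 =>
    (hx r h1 h2).continuousOn
  have hgcont : ∀ r, 1 ≤ r → r ≤ n → ContinuousOn (g r) s := fun r h1 h2 =>
    (hg r h1 h2).continuousOn
  -- main induction
  have key : ∀ j, j < n →
      -(∫ t in a..b, derivWithin φ s t * x n t) - ∫ t in a..b, φ t * g n t =
      (-1 : ℝ) ^ (j + 1) *
          (∫ t in a..b, iteratedDerivWithin (j + 1) φ s t * x (n - j) t)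
        - ∑ i ∈ Finset.range (j + 1), (-1 : ℝ) ^ i *
            ∫ t in a..b, iteratedDerivWithin i φ s t * g (n - i) t := by
    intro j
    induction j with
    | zero =>
      intro _
      have h1 : ∫ t in a..b, iteratedDerivWithin 1 φ s t * x n t =
          ∫ t in a..b, derivWithin φ s t * x n t := by
        apply intervalIntegral.integral_congr
        intro t ht
        rw [Set.uIcc_of_le hab.le] at ht
        simp only
        rw [show (1 : ℕ) = 0 + 1 from rfl, iteratedDerivWithin_succ]
        simp [iteratedDerivWithin_zero]
      rw [Finset.sum_range_one]
      simp only [Nat.sub_zero, pow_zero, one_mul, pow_one, iteratedDerivWithin_zero, h1]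
      ring
    | succ j ih =>
      intro hj
      have hj' : j < n := by omega
      rw [ih hj']
      -- apply ibp_step with F = φ^(j+1), G = φ^(j+2), u = x (n-j-1), v = x (n-j), w = g (n-j-1)
      have hr1 : 1 ≤ n - j - 1 := by omega
      have hrn : n - j - 1 ≤ n - 1 := by omega
      have hsucc : n - j - 1 + 1 = n - j := by omega
      have hstep := ibp_step a b hab (iteratedDerivWithin (j + 1) φ s)
        (iteratedDerivWithin (j + 2) φ s) (x (n - j - 1)) (x (n - j)) (g (n - j - 1))
        ((hφ0 (j + 1) (by omega)).1) ((hφ0 (j + 1) (by omega)).2)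
        (hφcont (j + 1) (by omega)) (hφcont (j + 2) (by omega))
        (hxcont (n - j - 1) hr1 (by omega)) (hxcont (n - j) (by omega) (by omega))
        (hgcont (n - j - 1) hr1 (by omega))
        (hφder (j + 1) (by omega))
        (fun t ht => by simpa [hsucc] using hxder (n - j - 1) hr1 hrn t ht)
      conv_rhs => rw [Finset.sum_range_succ]
      have e1 : n - (j + 1) = n - j - 1 := by omega
      rw [hstep, e1, pow_succ (-1 : ℝ) (j + 1)]
      ring
  have hfin := key (n - 1) (by omega)
  have e1 : n - 1 + 1 = n := by omega
  have e2 : n - (n - 1) = 1 := by omega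
  rw [e1, e2] at hfin
  rw [hfin]
  congr 1
  apply Finset.sum_bij' (fun i _ => n - i) (fun r _ => n - r)
  · intro i hi
    simp only [Finset.mem_range] at hi
    simp only [Finset.mem_Icc]
    omega
  · intro r hr
    simp only [Finset.mem_Icc] at hr
    simp only [Finset.mem_range]
    omega
  · intro i hi
    simp only [Finset.mem_range] at hi
    omega
  · intro r hr
    simp only [Finset.mem_Icc] at hr
    omega
  · intro i hi
    simp only [Finset.mem_range] at hi
    rw [Nat.sub_sub_self (by omega : i ≤ n)]
end
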